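/- arXiv:1703.01176 — 2 statements merged into one kernel-verified Lean document; each statement's English description precedes it below -/
import Mathlib

section
/- For every vector field $K \in C_0^2(\mathbb{R}^2, \mathbb{R}^2)$ and every $t \in \mathbb{R}$, there is an absolute constant $C$ such that $\|\langle t-r \rangle \nabla K\|_{L^2(\mathbb{R}^2)} \le C\left( \|\langle t-r \rangle \nabla \cdot K\|_{L^2} + \|\langle t-r \rangle \nabla^\perp \cdot K\|_{L^2} + \|K\|_{L^2}\right)$, where $r = |x|$ and $\langle \sigma \rangle = \sqrt{1+\sigma^2}$. -/
open MeasureTheory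

noncomputable section

abbrev E2 := EuclideanSpace ℝ (Fin 2)

/-- `i`-th partial derivative of a scalar function on `ℝ²`. -/
noncomputable def pd (i : Fin 2) (f : E2 → ℝ) (x : E2) : ℝ :=
  fderiv ℝ f x (EuclideanSpace.single i 1)

/-- The weight `⟨t - r⟩ = √(1 + (t - |x|)²)`. -/
noncomputable def jb (t : ℝ) (x : E2) : ℝ := Real.sqrt (1 + (t - ‖x‖) ^ 2)

open Set

lemma coord_le_norm (z : E2) (i : Fin 2) : |z i| ≤ ‖z‖ := by
  rw [EuclideanSpace.norm_eq, ← Real.sqrt_sq (abs_nonneg (z i))]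
  apply Real.sqrt_le_sqrt
  have := Finset.single_le_sum (f := fun j => ‖z j‖ ^ 2) (fun j _ => by positivity)
    (Finset.mem_univ i)
  simpa [Real.norm_eq_abs, sq_abs] using this

lemma div_integral_zero (f : Fin 2 → E2 → ℝ) (f' : Fin 2 → E2 → (E2 →L[ℝ] ℝ))
    (hc : ∀ i, Continuous (f i))
    (hd : ∀ i, ∀ x : E2, x ≠ 0 → HasFDerivAt (f i) (f' i x) x)
    (R : ℝ) (hR : 0 < R)
    (hf0 : ∀ i (x : E2), R ≤ ‖x‖ → f i x = 0)
    (hf'0 : ∀ i (x : E2), R ≤ ‖x‖ → f' i x = 0)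
    (hint : Integrable (fun x : E2 => ∑ i, f' i x (EuclideanSpace.single i 1))) :
    ∫ x : E2, ∑ i, f' i x (EuclideanSpace.single i 1) = 0 := by
  set L : (Fin 2 → ℝ) ≃L[ℝ] E2 := (EuclideanSpace.equiv (Fin 2) ℝ).symm with hL
  have hmp : MeasurePreserving (MeasurableEquiv.toLp 2 (Fin 2 → ℝ)) volume volume :=
    (EuclideanSpace.volume_preserving_symm_measurableEquiv_toLp (Fin 2)).symm
  have hLcoord : ∀ (y : Fin 2 → ℝ) (i : Fin 2), |y i| ≤ ‖L y‖ := fun y i => coord_le_norm (L y) i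
  have htrans : ∫ x : E2, ∑ i, f' i x (EuclideanSpace.single i 1)
      = ∫ y : Fin 2 → ℝ, ∑ i, f' i (L y) (EuclideanSpace.single i 1) := by
    rw [← hmp.integral_comp (MeasurableEquiv.measurableEmbedding _)]; rfl
  rw [htrans]
  set F : Fin 2 → (Fin 2 → ℝ) → ℝ := fun i y => f i (L y) with hF
  set F' : Fin 2 → (Fin 2 → ℝ) → ((Fin 2 → ℝ) →L[ℝ] ℝ) :=
    fun i y => (f' i (L y)).comp (L : (Fin 2 → ℝ) →L[ℝ] E2) with hF'
  have hFd : ∀ i (y : Fin 2 → ℝ), y ≠ 0 → HasFDerivAt (F i) (F' i y) y := by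
    intro i y hy
    have hLy0 : L y ≠ 0 := by
      simp only [ne_eq, EmbeddingLike.map_eq_zero_iff]
      exact hy
    exact (hd i (L y) hLy0).comp y (L.toContinuousLinearMap.hasFDerivAt)
  have hdiv_eq : ∀ y : Fin 2 → ℝ,
      (∑ i, F' i y (Pi.single i 1)) = ∑ i, f' i (L y) (EuclideanSpace.single i 1) := by
    intro y; rfl
  have hIcc : ∫ y : Fin 2 → ℝ, ∑ i, f' i (L y) (EuclideanSpace.single i 1)
      = ∫ y in Icc (fun _ : Fin 2 => -R) (fun _ => R), ∑ i, F' i y (Pi.single i 1) := by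
    simp only [hdiv_eq]
    refine (setIntegral_eq_integral_of_forall_compl_eq_zero ?_).symm
    intro y hy
    simp only [mem_Icc, Pi.le_def, not_and_or, not_forall, not_le] at hy
    have : ∃ i, R ≤ |y i| := by
      rcases hy with ⟨i, hi⟩ | ⟨i, hi⟩
      · exact ⟨i, by rw [abs_of_nonpos (by linarith)]; linarith⟩
      · exact ⟨i, le_of_lt (lt_of_lt_of_le hi (le_abs_self _))⟩
    obtain ⟨i, hi⟩ := this
    have hnorm : R ≤ ‖L y‖ := le_trans hi (hLcoord y i)
    simp [hf'0 _ _ hnorm]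
  rw [hIcc]
  have hle : (fun _ : Fin 2 => -R) ≤ fun _ : Fin 2 => R := fun i => by simp; linarith
  have := MeasureTheory.integral_divergence_of_hasFDerivAt_off_countable'
    (a := fun _ : Fin 2 => -R) (b := fun _ => R) hle F F' ({0} : Set (Fin 2 → ℝ))
    (Set.countable_singleton 0)
    (fun i => ((hc i).comp L.continuous).continuousOn)
    (fun y hy i => hFd i y (by simpa using hy.2))
    (by
      have : Integrable (fun y : Fin 2 → ℝ => ∑ i, F' i y (Pi.single i 1)) := by
        simp only [hdiv_eq]
        exact (hmp.integrable_comp_emb (MeasurableEquiv.measurableEmbedding _)).2 hint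
      exact this.integrableOn)
  rw [this]
  refine Finset.sum_eq_zero fun i _ => ?_
  have hface : ∀ (c : ℝ), |c| = R → ∀ x : Fin 1 → ℝ, F i (Fin.insertNth i c x) = 0 := by
    intro c hc' x
    apply hf0
    refine le_trans ?_ (hLcoord _ i)
    rw [Fin.insertNth_apply_same, hc']
  have h1 : (∫ x in Icc ((fun _ : Fin 2 => -R) ∘ i.succAbove) ((fun _ => R) ∘ i.succAbove),
      F i (i.insertNth ((fun _ : Fin 2 => R) i) x)) = 0 :=
    integral_eq_zero_of_ae
      (Filter.Eventually.of_forall fun x => hface R (abs_of_pos hR) x)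
  have h2 : (∫ x in Icc ((fun _ : Fin 2 => -R) ∘ i.succAbove) ((fun _ => R) ∘ i.succAbove),
      F i (i.insertNth ((fun _ : Fin 2 => -R) i) x)) = 0 :=
    integral_eq_zero_of_ae
      (Filter.Eventually.of_forall fun x => hface (-R) (by rw [abs_neg, abs_of_pos hR]) x)
  rw [h1, h2, sub_zero]

lemma pd_eq_comp (j : Fin 2) (f : E2 → ℝ) :
    pd j f = (ContinuousLinearMap.apply ℝ ℝ (EuclideanSpace.single j 1)) ∘ (fderiv ℝ f) := rfl

lemma pd_contDiff {f : E2 → ℝ} (hf : ContDiff ℝ 2 f) (j : Fin 2) : ContDiff ℝ 1 (pd j f) := by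
  rw [pd_eq_comp]
  exact (ContinuousLinearMap.apply ℝ ℝ (EuclideanSpace.single j 1)).contDiff.comp
    (hf.fderiv_right (m := 1) (by norm_num))

lemma pd_support {f : E2 → ℝ} (j : Fin 2) : Function.support (pd j f) ⊆ tsupport f := by
  intro x hx
  by_contra hxt
  exact hx (by simp [pd, fderiv_of_notMem_tsupport _ hxt])

lemma pd_hcs {f : E2 → ℝ} (hf : HasCompactSupport f) (j : Fin 2) : HasCompactSupport (pd j f) :=
  hf.mono' (pd_support j)

lemma pd_mul {f g : E2 → ℝ} {x : E2} (hf : DifferentiableAt ℝ f x)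
    (hg : DifferentiableAt ℝ g x) (j : Fin 2) :
    pd j (fun y => f y * g y) x = f x * pd j g x + pd j f x * g x := by
  simp only [pd, fderiv_fun_mul hf hg]
  simp [mul_comm]

lemma pd_neg {f : E2 → ℝ} (j : Fin 2) (x : E2) :
    pd j (fun y => -(f y)) x = -(pd j f x) := by
  simp [pd, fderiv_neg]

lemma pd_pd {f : E2 → ℝ} (hf : ContDiff ℝ 2 f) (x : E2) (i j : Fin 2) :
    pd i (pd j f) x = fderiv ℝ (fderiv ℝ f) x (EuclideanSpace.single i 1)
      (EuclideanSpace.single j 1) := by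
  have hdf : DifferentiableAt ℝ (fderiv ℝ f) x :=
    ((hf.fderiv_right (m := 1) (by norm_num)).differentiable one_ne_zero).differentiableAt
  have h := ((ContinuousLinearMap.apply ℝ ℝ (EuclideanSpace.single j 1)).hasFDerivAt.comp x
    hdf.hasFDerivAt).fderiv
  simp only [pd, pd_eq_comp, h]
  rfl

lemma pd_comm {f : E2 → ℝ} (hf : ContDiff ℝ 2 f) (x : E2) :
    pd 0 (pd 1 f) x = pd 1 (pd 0 f) x := by
  rw [pd_pd hf, pd_pd hf]
  exact (hf.contDiffAt.isSymmSndFDerivAt (by simp)) _ _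

set_option maxHeartbeats 2000000 in
/-- There is an absolute constant `C` such that for every `C²` compactly supported
vector field `K : ℝ² → ℝ²` and every `t ∈ ℝ`,
`‖⟨t-r⟩∇K‖_{L²} ≤ C (‖⟨t-r⟩∇·K‖_{L²} + ‖⟨t-r⟩∇⊥·K‖_{L²} + ‖K‖_{L²})`. -/
theorem weighted_gradient_estimate :
    ∃ C : ℝ, 0 < C ∧
      ∀ (K : Fin 2 → E2 → ℝ), (∀ i, ContDiff ℝ 2 (K i)) →
        (∀ i, HasCompactSupport (K i)) →
        ∀ t : ℝ,
          Real.sqrt (∫ x : E2,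
              (jb t x) ^ 2 * ∑ i : Fin 2, ∑ j : Fin 2, (pd j (K i) x) ^ 2) ≤
            C * (Real.sqrt (∫ x : E2,
                  (jb t x) ^ 2 * (pd 0 (K 0) x + pd 1 (K 1) x) ^ 2)
              + Real.sqrt (∫ x : E2,
                  (jb t x) ^ 2 * (-pd 1 (K 0) x + pd 0 (K 1) x) ^ 2)
              + Real.sqrt (∫ x : E2, ∑ i : Fin 2, (K i x) ^ 2)) := by
  refine ⟨6, by norm_num, fun K hK2 hKcs t => ?_⟩
  -- notation
  set ψ : E2 → ℝ := fun x => 1 + (t - ‖x‖) ^ 2 with hψdef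
  have hjb2 : ∀ x : E2, jb t x ^ 2 = ψ x := fun x => Real.sq_sqrt (by positivity)
  have hjb0 : ∀ x : E2, 0 ≤ jb t x := fun x => Real.sqrt_nonneg _
  have hjbabs : ∀ x : E2, |t - ‖x‖| ≤ jb t x := by
    intro x
    rw [jb, ← Real.sqrt_sq_eq_abs]
    exact Real.sqrt_le_sqrt (by nlinarith)
  have hψc : Continuous ψ := by
    apply continuous_const.add
    exact (continuous_const.sub continuous_norm).pow 2
  have hψ0 : ∀ x, 0 ≤ ψ x := fun x => by positivity
  have hjbc : Continuous (jb t) := by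
    apply Real.continuous_sqrt.comp
    exact continuous_const.add ((continuous_const.sub continuous_norm).pow 2)
  -- regularity of K
  have hK1 : ∀ i, ContDiff ℝ 1 (K i) := fun i => (hK2 i).of_le one_le_two
  have hKd : ∀ i (x : E2), DifferentiableAt ℝ (K i) x :=
    fun i x => ((hK1 i).differentiable one_ne_zero).differentiableAt
  have hKc : ∀ i, Continuous (K i) := fun i => (hK1 i).continuous
  have hpdc : ∀ i j, Continuous (pd j (K i)) := fun i j => (pd_contDiff (hK2 i) j).continuous
  have hpdd : ∀ i j (x : E2), DifferentiableAt ℝ (pd j (K i)) x :=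
    fun i j x => ((pd_contDiff (hK2 i) j).differentiable one_ne_zero).differentiableAt
  -- supports
  set S : Set E2 := tsupport (K 0) ∪ tsupport (K 1) with hSdef
  have hScompact : IsCompact S := (hKcs 0).union (hKcs 1)
  have hSclosed : IsClosed S := hScompact.isClosed
  obtain ⟨R, hR0, hSR⟩ : ∃ R, 0 < R ∧ S ⊆ Metric.ball 0 R := by
    obtain ⟨R, hR, h⟩ := hScompact.isBounded.subset_ball_lt 0 0
    exact ⟨R, hR, h⟩
  have hout : ∀ x : E2, R ≤ ‖x‖ → x ∉ S := by
    intro x hx hmem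
    have := hSR hmem
    rw [Metric.mem_ball, dist_zero_right] at this
    linarith
  have hKzero : ∀ i (x : E2), x ∉ S → K i x = 0 := by
    intro i x hx
    apply image_eq_zero_of_notMem_tsupport
    fin_cases i
    · exact fun h => hx (Or.inl h)
    · exact fun h => hx (Or.inr h)
  have hpdzero : ∀ i j (x : E2), x ∉ S → pd j (K i) x = 0 := by
    intro i j x hx
    by_contra h
    have hts : x ∈ tsupport (K i) := pd_support j (by simpa [Function.mem_support] using h)
    fin_cases i
    · exact hx (Or.inl hts)
    · exact hx (Or.inr hts)
  -- the auxiliary vector field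
  set V0 : E2 → ℝ := fun x => K 0 x * pd 1 (K 1) x with hV0def
  set V1 : E2 → ℝ := fun x => -(K 0 x * pd 0 (K 1) x) with hV1def
  have hV0cd : ContDiff ℝ 1 V0 := (hK1 0).mul (pd_contDiff (hK2 1) 1)
  have hV1cd : ContDiff ℝ 1 V1 := ((hK1 0).mul (pd_contDiff (hK2 1) 0)).neg
  have hV0c : Continuous V0 := hV0cd.continuous
  have hV1c : Continuous V1 := hV1cd.continuous
  have hV0zero : ∀ x : E2, x ∉ S → V0 x = 0 := fun x hx => by
    simp [hV0def, hKzero 0 x hx]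
  have hV1zero : ∀ x : E2, x ∉ S → V1 x = 0 := fun x hx => by
    simp [hV1def, hKzero 0 x hx]
  have htsV0 : tsupport V0 ⊆ S := by
    apply closure_minimal _ hSclosed
    intro x hx
    by_contra h
    exact hx (hV0zero x h)
  have htsV1 : tsupport V1 ⊆ S := by
    apply closure_minimal _ hSclosed
    intro x hx
    by_contra h
    exact hx (hV1zero x h)
  have hdV0zero : ∀ x : E2, x ∉ S → fderiv ℝ V0 x = 0 := fun x hx =>
    fderiv_of_notMem_tsupport _ (fun hc => hx (htsV0 hc))
  have hdV1zero : ∀ x : E2, x ∉ S → fderiv ℝ V1 x = 0 := fun x hx =>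
    fderiv_of_notMem_tsupport _ (fun hc => hx (htsV1 hc))
  have hpdV0zero : ∀ j (x : E2), x ∉ S → pd j V0 x = 0 := fun j x hx => by
    simp [pd, hdV0zero x hx]
  have hpdV1zero : ∀ j (x : E2), x ∉ S → pd j V1 x = 0 := fun j x hx => by
    simp [pd, hdV1zero x hx]
  have hpdV0c : ∀ j, Continuous (pd j V0) := fun j => by
    rw [pd_eq_comp]
    exact (ContinuousLinearMap.apply ℝ ℝ _).continuous.comp (hV0cd.continuous_fderiv one_ne_zero)
  have hpdV1c : ∀ j, Continuous (pd j V1) := fun j => by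
    rw [pd_eq_comp]
    exact (ContinuousLinearMap.apply ℝ ℝ _).continuous.comp (hV1cd.continuous_fderiv one_ne_zero)
  -- derivative of the weight
  set Dψ : E2 → (E2 →L[ℝ] ℝ) :=
    fun x => (-(2 * (t - ‖x‖))) • fderiv ℝ (fun y : E2 => ‖y‖) x with hDψdef
  have hψd : ∀ x : E2, x ≠ 0 → HasFDerivAt ψ (Dψ x) x := by
    intro x hx
    have hn : DifferentiableAt ℝ (fun y : E2 => ‖y‖) x :=
      ((contDiffAt_norm ℝ (n := 1) hx).differentiableAt one_ne_zero)
    have hu : HasDerivAt (fun r : ℝ => 1 + (t - r) ^ 2) (-(2 * (t - ‖x‖))) ‖x‖ := by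
      have h1 : HasDerivAt (fun r : ℝ => t - r) (-1) ‖x‖ := (hasDerivAt_id _).const_sub t
      have h2 := (h1.pow 2).const_add 1
      refine h2.congr_deriv ?_
      push_cast
      ring
    exact hu.comp_hasFDerivAt x hn.hasFDerivAt
  have hDψnorm : ∀ x : E2, ‖Dψ x‖ ≤ 2 * jb t x := by
    intro x
    show ‖(-(2 * (t - ‖x‖))) • fderiv ℝ (fun y : E2 => ‖y‖) x‖ ≤ 2 * jb t x
    rw [norm_smul]
    have h1 : ‖fderiv ℝ (fun y : E2 => ‖y‖) x‖ ≤ 1 :=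
      le_trans (norm_fderiv_le_of_lipschitz ℝ lipschitzWith_one_norm) (by norm_num)
    calc ‖-(2 * (t - ‖x‖))‖ * ‖fderiv ℝ (fun y : E2 => ‖y‖) x‖
        ≤ ‖-(2 * (t - ‖x‖))‖ * 1 := mul_le_mul_of_nonneg_left h1 (norm_nonneg _)
      _ = 2 * |t - ‖x‖| := by rw [mul_one, norm_neg, Real.norm_eq_abs, abs_mul]; simp
      _ ≤ 2 * jb t x := by have := hjbabs x; linarith
  set g : Fin 2 → E2 → ℝ := fun i x => Dψ x (EuclideanSpace.single i 1) with hgdef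
  have hgbound : ∀ (i : Fin 2) (x : E2), |g i x| ≤ 2 * jb t x := by
    intro i x
    calc |g i x| ≤ ‖Dψ x‖ * ‖EuclideanSpace.single i (1 : ℝ)‖ := (Dψ x).le_opNorm _
      _ = ‖Dψ x‖ := by rw [EuclideanSpace.norm_single, norm_one, mul_one]
      _ ≤ 2 * jb t x := hDψnorm x
  have hgmeas : ∀ i, Measurable (g i) := by
    intro i
    have : g i = fun x => (-(2 * (t - ‖x‖))) *
        (fderiv ℝ (fun y : E2 => ‖y‖) x (EuclideanSpace.single i 1)) := rfl
    rw [this]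
    exact ((continuous_const.mul (continuous_const.sub continuous_norm)).neg).measurable.mul
      (measurable_fderiv_apply_const (𝕜 := ℝ) (f := fun y : E2 => ‖y‖) (EuclideanSpace.single i 1))
  -- integrability helper
  have hccs_int : ∀ h : E2 → ℝ, Continuous h → (∀ x, x ∉ S → h x = 0) → Integrable h :=
    fun h hc h0 => hc.integrable_of_hasCompactSupport (HasCompactSupport.intro hScompact h0)
  -- sum abbreviations
  have hSS : ∀ x : E2, (∑ i : Fin 2, ∑ j : Fin 2, pd j (K i) x ^ 2)
      = pd 0 (K 0) x ^ 2 + pd 1 (K 0) x ^ 2 + (pd 0 (K 1) x ^ 2 + pd 1 (K 1) x ^ 2) := by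
    intro x
    simp [Fin.sum_univ_two]
  have hNN : ∀ x : E2, (∑ i : Fin 2, (K i x) ^ 2) = K 0 x ^ 2 + K 1 x ^ 2 := by
    intro x
    simp [Fin.sum_univ_two]
  -- list of integrable functions
  have hint_I : Integrable (fun x : E2 => ψ x *
      (pd 0 (K 0) x ^ 2 + pd 1 (K 0) x ^ 2 + (pd 0 (K 1) x ^ 2 + pd 1 (K 1) x ^ 2))) := by
    refine hccs_int _ (hψc.mul ?_) (fun x hx => by simp [hpdzero _ _ _ hx])
    exact (((hpdc 0 0).pow 2).add ((hpdc 0 1).pow 2)).add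
      (((hpdc 1 0).pow 2).add ((hpdc 1 1).pow 2))
  have hint_D : Integrable (fun x : E2 => ψ x * (pd 0 (K 0) x + pd 1 (K 1) x) ^ 2) :=
    hccs_int _ (hψc.mul (((hpdc 0 0).add (hpdc 1 1)).pow 2))
      (fun x hx => by simp [hpdzero _ _ _ hx])
  have hint_R : Integrable (fun x : E2 => ψ x * (-pd 1 (K 0) x + pd 0 (K 1) x) ^ 2) :=
    hccs_int _ (hψc.mul (((hpdc 0 1).neg.add (hpdc 1 0)).pow 2))
      (fun x hx => by simp [hpdzero _ _ _ hx])
  have hint_N : Integrable (fun x : E2 => K 0 x ^ 2 + K 1 x ^ 2) :=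
    hccs_int _ (((hKc 0).pow 2).add ((hKc 1).pow 2))
      (fun x hx => by simp [hKzero _ _ hx])
  have hint_J : Integrable (fun x : E2 => ψ x *
      (pd 0 (K 0) x * pd 1 (K 1) x - pd 1 (K 0) x * pd 0 (K 1) x)) :=
    hccs_int _ (hψc.mul (((hpdc 0 0).mul (hpdc 1 1)).sub ((hpdc 0 1).mul (hpdc 1 0))))
      (fun x hx => by simp [hpdzero _ _ _ hx])
  have hint_pdV : Integrable (fun x : E2 => ψ x * pd 0 V0 x + ψ x * pd 1 V1 x) :=
    hccs_int _ ((hψc.mul (hpdV0c 0)).add (hψc.mul (hpdV1c 1)))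
      (fun x hx => by simp [hpdV0zero _ _ hx, hpdV1zero _ _ hx])
  have hint_b1 : Integrable (fun x : E2 => 2 * jb t x * (|V0 x| + |V1 x|)) :=
    hccs_int _ ((continuous_const.mul hjbc).mul (hV0c.abs.add hV1c.abs))
      (fun x hx => by simp [hV0zero _ hx, hV1zero _ hx])
  have hint_b2 : Integrable (fun x : E2 => 4 * jb t x * (|V0 x| + |V1 x|)) :=
    hccs_int _ ((continuous_const.mul hjbc).mul (hV0c.abs.add hV1c.abs))
      (fun x hx => by simp [hV0zero _ hx, hV1zero _ hx])
  have hgV_ptbound : ∀ x : E2, |V0 x * g 0 x + V1 x * g 1 x| ≤ 2 * jb t x * (|V0 x| + |V1 x|) := by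
    intro x
    have h0 := hgbound 0 x
    have h1 := hgbound 1 x
    have e0 : |V0 x * g 0 x| = |V0 x| * |g 0 x| := abs_mul _ _
    have e1 : |V1 x * g 1 x| = |V1 x| * |g 1 x| := abs_mul _ _
    calc |V0 x * g 0 x + V1 x * g 1 x| ≤ |V0 x * g 0 x| + |V1 x * g 1 x| := abs_add_le _ _
      _ = |V0 x| * |g 0 x| + |V1 x| * |g 1 x| := by rw [e0, e1]
      _ ≤ |V0 x| * (2 * jb t x) + |V1 x| * (2 * jb t x) :=
          add_le_add (mul_le_mul_of_nonneg_left h0 (abs_nonneg _))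
            (mul_le_mul_of_nonneg_left h1 (abs_nonneg _))
      _ = 2 * jb t x * (|V0 x| + |V1 x|) := by ring
  have hint_gV : Integrable (fun x : E2 => V0 x * g 0 x + V1 x * g 1 x) := by
    refine hint_b1.mono' ?_ (Filter.Eventually.of_forall fun x => ?_)
    · exact ((hV0c.measurable.mul (hgmeas 0)).add (hV1c.measurable.mul (hgmeas 1))).aestronglyMeasurable
    · rw [Real.norm_eq_abs]
      exact hgV_ptbound x
  -- divergence theorem
  have hdiv0 : ∫ x : E2,
      ((ψ x * pd 0 V0 x + ψ x * pd 1 V1 x) + (V0 x * g 0 x + V1 x * g 1 x)) = 0 := by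
    set f : Fin 2 → E2 → ℝ := ![fun x => ψ x * V0 x, fun x => ψ x * V1 x] with hfdef
    set f' : Fin 2 → E2 → (E2 →L[ℝ] ℝ) :=
      ![fun x => ψ x • fderiv ℝ V0 x + V0 x • Dψ x,
        fun x => ψ x • fderiv ℝ V1 x + V1 x • Dψ x] with hf'def
    have hdiv_eq : ∀ x : E2, (∑ i : Fin 2, f' i x (EuclideanSpace.single i 1))
        = (ψ x * pd 0 V0 x + ψ x * pd 1 V1 x) + (V0 x * g 0 x + V1 x * g 1 x) := by
      intro x
      rw [Fin.sum_univ_two]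
      show (ψ x • fderiv ℝ V0 x + V0 x • Dψ x) (EuclideanSpace.single 0 1)
        + (ψ x • fderiv ℝ V1 x + V1 x • Dψ x) (EuclideanSpace.single 1 1) = _
      simp only [ContinuousLinearMap.add_apply, ContinuousLinearMap.coe_smul',
        Pi.smul_apply, smul_eq_mul]
      show ψ x * pd 0 V0 x + V0 x * g 0 x + (ψ x * pd 1 V1 x + V1 x * g 1 x) = _
      ring
    have hres := div_integral_zero f f'
      (by
        intro i
        fin_cases i
        · exact hψc.mul hV0c
        · exact hψc.mul hV1c)
      (by
        intro i x hx
        fin_cases i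
        · exact (hψd x hx).mul ((hV0cd.differentiable one_ne_zero x).hasFDerivAt)
        · exact (hψd x hx).mul ((hV1cd.differentiable one_ne_zero x).hasFDerivAt))
      R hR0
      (by
        intro i x hx
        fin_cases i
        · show ψ x * V0 x = 0
          rw [hV0zero x (hout x hx), mul_zero]
        · show ψ x * V1 x = 0
          rw [hV1zero x (hout x hx), mul_zero])
      (by
        intro i x hx
        fin_cases i
        · show ψ x • fderiv ℝ V0 x + V0 x • Dψ x = 0
          rw [hdV0zero x (hout x hx), hV0zero x (hout x hx), smul_zero, zero_smul, add_zero]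
        · show ψ x • fderiv ℝ V1 x + V1 x • Dψ x = 0
          rw [hdV1zero x (hout x hx), hV1zero x (hout x hx), smul_zero, zero_smul, add_zero])
      (by
        apply Integrable.congr (hint_pdV.add hint_gV)
        exact Filter.Eventually.of_forall fun x => (hdiv_eq x).symm)
    rw [← hres]
    exact integral_congr_ae (Filter.Eventually.of_forall fun x => (hdiv_eq x).symm)
  have hsplitdiv : (∫ x : E2, (ψ x * pd 0 V0 x + ψ x * pd 1 V1 x))
      + (∫ x : E2, (V0 x * g 0 x + V1 x * g 1 x)) = 0 := by
    rw [← integral_add hint_pdV hint_gV]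
    exact hdiv0
  -- the null-form identity
  have hpdV : ∀ x : E2, pd 0 V0 x + pd 1 V1 x
      = pd 0 (K 0) x * pd 1 (K 1) x - pd 1 (K 0) x * pd 0 (K 1) x := by
    intro x
    have h0 : pd 0 V0 x = K 0 x * pd 0 (pd 1 (K 1)) x + pd 0 (K 0) x * pd 1 (K 1) x := by
      rw [hV0def]
      exact pd_mul (hKd 0 x) (hpdd 1 1 x) 0
    have h1 : pd 1 V1 x = -(K 0 x * pd 1 (pd 0 (K 1)) x + pd 1 (K 0) x * pd 0 (K 1) x) := by
      rw [hV1def]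
      rw [show (fun y : E2 => -(K 0 y * pd 0 (K 1) y))
        = fun y => -((fun z => K 0 z * pd 0 (K 1) z) y) from rfl]
      rw [pd_neg]
      rw [pd_mul (hKd 0 x) (hpdd 1 0 x) 1]
    rw [h0, h1, pd_comm (hK2 1) x]
    ring
  -- abbreviate the four integrals
  set Dv := ∫ x : E2, ψ x * (pd 0 (K 0) x + pd 1 (K 1) x) ^ 2 with hDvdef
  set Rv := ∫ x : E2, ψ x * (-pd 1 (K 0) x + pd 0 (K 1) x) ^ 2 with hRvdef
  set Nv := ∫ x : E2, (K 0 x ^ 2 + K 1 x ^ 2) with hNvdef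
  set Iv := ∫ x : E2, ψ x *
      (pd 0 (K 0) x ^ 2 + pd 1 (K 0) x ^ 2 + (pd 0 (K 1) x ^ 2 + pd 1 (K 1) x ^ 2)) with hIvdef
  have hDv0 : 0 ≤ Dv := integral_nonneg fun x => mul_nonneg (hψ0 x) (sq_nonneg _)
  have hRv0 : 0 ≤ Rv := integral_nonneg fun x => mul_nonneg (hψ0 x) (sq_nonneg _)
  have hNv0 : 0 ≤ Nv := integral_nonneg fun x => by positivity
  have hIv0 : 0 ≤ Iv := integral_nonneg fun x =>
    mul_nonneg (hψ0 x) (by positivity)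
  -- decomposition
  set Jv := ∫ x : E2, ψ x *
      (pd 0 (K 0) x * pd 1 (K 1) x - pd 1 (K 0) x * pd 0 (K 1) x) with hJvdef
  have hIDR : Iv = Dv + Rv - 2 * Jv := by
    have h1 : Iv = ∫ x : E2, ((ψ x * (pd 0 (K 0) x + pd 1 (K 1) x) ^ 2
        + ψ x * (-pd 1 (K 0) x + pd 0 (K 1) x) ^ 2)
        - 2 * (ψ x * (pd 0 (K 0) x * pd 1 (K 1) x - pd 1 (K 0) x * pd 0 (K 1) x))) := by
      rw [hIvdef]
      apply integral_congr_ae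
      apply Filter.Eventually.of_forall
      intro x
      ring
    have hint_DR : Integrable (fun x : E2 => ψ x * (pd 0 (K 0) x + pd 1 (K 1) x) ^ 2
        + ψ x * (-pd 1 (K 0) x + pd 0 (K 1) x) ^ 2) := hint_D.add hint_R
    have hint_J2 : Integrable (fun x : E2 => 2 * (ψ x *
        (pd 0 (K 0) x * pd 1 (K 1) x - pd 1 (K 0) x * pd 0 (K 1) x))) := hint_J.const_mul 2
    rw [h1, integral_sub hint_DR hint_J2,
      integral_add hint_D hint_R, integral_const_mul, hDvdef, hRvdef, hJvdef]
  have hJv_eq : Jv = ∫ x : E2, (ψ x * pd 0 V0 x + ψ x * pd 1 V1 x) := by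
    rw [hJvdef]
    apply integral_congr_ae
    apply Filter.Eventually.of_forall
    intro x
    simp only [← hpdV]
    ring
  have hJv : Jv = -∫ x : E2, (V0 x * g 0 x + V1 x * g 1 x) := by
    rw [hJv_eq]
    linarith [hsplitdiv]
  -- bound the error term
  have hgVle : ∫ x : E2, (V0 x * g 0 x + V1 x * g 1 x) ≤
      ∫ x : E2, 2 * jb t x * (|V0 x| + |V1 x|) := by
    calc ∫ x : E2, (V0 x * g 0 x + V1 x * g 1 x)
        ≤ |∫ x : E2, (V0 x * g 0 x + V1 x * g 1 x)| := le_abs_self _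
      _ ≤ ∫ x : E2, |V0 x * g 0 x + V1 x * g 1 x| := by
          simpa [Real.norm_eq_abs] using
            norm_integral_le_integral_norm (μ := volume) (fun x : E2 => V0 x * g 0 x + V1 x * g 1 x)
      _ ≤ ∫ x : E2, 2 * jb t x * (|V0 x| + |V1 x|) :=
          integral_mono hint_gV.abs hint_b1 (fun x => hgV_ptbound x)
  have hb2_eq : ∫ x : E2, 4 * jb t x * (|V0 x| + |V1 x|)
      = 2 * ∫ x : E2, 2 * jb t x * (|V0 x| + |V1 x|) := by
    rw [← integral_const_mul]
    apply integral_congr_ae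
    apply Filter.Eventually.of_forall
    intro x
    ring
  have hb2le : ∫ x : E2, 4 * jb t x * (|V0 x| + |V1 x|) ≤ (1/2) * Iv + 16 * Nv := by
    have hrhs : Integrable (fun x : E2 => (1/2) * (ψ x *
        (pd 0 (K 0) x ^ 2 + pd 1 (K 0) x ^ 2 + (pd 0 (K 1) x ^ 2 + pd 1 (K 1) x ^ 2)))
        + 16 * (K 0 x ^ 2 + K 1 x ^ 2)) :=
      (hint_I.const_mul _).add (hint_N.const_mul _)
    have hpt : ∀ x : E2, 4 * jb t x * (|V0 x| + |V1 x|) ≤ (1/2) * (ψ x *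
        (pd 0 (K 0) x ^ 2 + pd 1 (K 0) x ^ 2 + (pd 0 (K 1) x ^ 2 + pd 1 (K 1) x ^ 2)))
        + 16 * (K 0 x ^ 2 + K 1 x ^ 2) := by
      intro x
      have hV0abs : |V0 x| = |K 0 x| * |pd 1 (K 1) x| := by rw [hV0def]; exact abs_mul _ _
      have hV1abs : |V1 x| = |K 0 x| * |pd 0 (K 1) x| := by
        rw [hV1def]; rw [abs_neg]; exact abs_mul _ _
      rw [hV0abs, hV1abs, ← hjb2 x]
      have hA1 : 8 * (jb t x * (|K 0 x| * |pd 1 (K 1) x|)) ≤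
          jb t x ^ 2 * pd 1 (K 1) x ^ 2 + 16 * K 0 x ^ 2 := by
        nlinarith [sq_nonneg (jb t x * |pd 1 (K 1) x| - 4 * |K 0 x|),
          sq_abs (pd 1 (K 1) x), sq_abs (K 0 x)]
      have hA2 : 8 * (jb t x * (|K 0 x| * |pd 0 (K 1) x|)) ≤
          jb t x ^ 2 * pd 0 (K 1) x ^ 2 + 16 * K 0 x ^ 2 := by
        nlinarith [sq_nonneg (jb t x * |pd 0 (K 1) x| - 4 * |K 0 x|),
          sq_abs (pd 0 (K 1) x), sq_abs (K 0 x)]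
      have hB1 : 0 ≤ jb t x ^ 2 * pd 0 (K 0) x ^ 2 :=
        mul_nonneg (sq_nonneg _) (sq_nonneg _)
      have hB2 : 0 ≤ jb t x ^ 2 * pd 1 (K 0) x ^ 2 :=
        mul_nonneg (sq_nonneg _) (sq_nonneg _)
      have hB3 : 0 ≤ K 1 x ^ 2 := sq_nonneg _
      linarith [hA1, hA2, hB1, hB2, hB3]
    calc ∫ x : E2, 4 * jb t x * (|V0 x| + |V1 x|)
        ≤ ∫ x : E2, ((1/2) * (ψ x *
          (pd 0 (K 0) x ^ 2 + pd 1 (K 0) x ^ 2 + (pd 0 (K 1) x ^ 2 + pd 1 (K 1) x ^ 2)))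
          + 16 * (K 0 x ^ 2 + K 1 x ^ 2)) := integral_mono hint_b2 hrhs hpt
      _ = (1/2) * Iv + 16 * Nv := by
          rw [integral_add (hint_I.const_mul _) (hint_N.const_mul _),
            integral_const_mul, integral_const_mul, hIvdef, hNvdef]
  -- combine
  have hkey : Iv ≤ 2 * Dv + 2 * Rv + 32 * Nv := by
    have h1 : Iv = Dv + Rv + 2 * ∫ x : E2, (V0 x * g 0 x + V1 x * g 1 x) := by
      rw [hIDR, hJv]; ring
    have h2 : 2 * ∫ x : E2, (V0 x * g 0 x + V1 x * g 1 x)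
        ≤ (1/2) * Iv + 16 * Nv := by
      calc 2 * ∫ x : E2, (V0 x * g 0 x + V1 x * g 1 x)
          ≤ 2 * ∫ x : E2, 2 * jb t x * (|V0 x| + |V1 x|) := by linarith [hgVle]
        _ = ∫ x : E2, 4 * jb t x * (|V0 x| + |V1 x|) := hb2_eq.symm
        _ ≤ (1/2) * Iv + 16 * Nv := hb2le
    linarith
  -- conclude
  have hgoal_eq : (∫ x : E2, jb t x ^ 2 * ∑ i : Fin 2, ∑ j : Fin 2, pd j (K i) x ^ 2) = Iv := by
    rw [hIvdef]
    apply integral_congr_ae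
    apply Filter.Eventually.of_forall
    intro x
    simp only [hjb2, hSS]
  have hgoalD : (∫ x : E2, jb t x ^ 2 * (pd 0 (K 0) x + pd 1 (K 1) x) ^ 2) = Dv := by
    rw [hDvdef]
    apply integral_congr_ae
    apply Filter.Eventually.of_forall
    intro x
    simp only [hjb2]
  have hgoalR : (∫ x : E2, jb t x ^ 2 * (-pd 1 (K 0) x + pd 0 (K 1) x) ^ 2) = Rv := by
    rw [hRvdef]
    apply integral_congr_ae
    apply Filter.Eventually.of_forall
    intro x
    simp only [hjb2]
  have hgoalN : (∫ x : E2, ∑ i : Fin 2, (K i x) ^ 2) = Nv := by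
    rw [hNvdef]
    apply integral_congr_ae
    apply Filter.Eventually.of_forall
    intro x
    simp only [hNN]
  rw [hgoal_eq, hgoalD, hgoalR, hgoalN]
  have hsd := Real.sqrt_nonneg Dv
  have hsr := Real.sqrt_nonneg Rv
  have hsn := Real.sqrt_nonneg Nv
  have h6 : Iv ≤ (6 * (Real.sqrt Dv + Real.sqrt Rv + Real.sqrt Nv)) ^ 2 := by
    have e1 : Real.sqrt Dv ^ 2 = Dv := Real.sq_sqrt hDv0
    have e2 : Real.sqrt Rv ^ 2 = Rv := Real.sq_sqrt hRv0
    have e3 : Real.sqrt Nv ^ 2 = Nv := Real.sq_sqrt hNv0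
    linarith [hkey, e1, e2, e3, mul_nonneg hsd hsr, mul_nonneg hsd hsn, mul_nonneg hsr hsn,
      sq_nonneg (Real.sqrt Dv), sq_nonneg (Real.sqrt Rv), sq_nonneg (Real.sqrt Nv)]
  calc Real.sqrt Iv ≤ Real.sqrt ((6 * (Real.sqrt Dv + Real.sqrt Rv + Real.sqrt Nv)) ^ 2) :=
        Real.sqrt_le_sqrt h6
    _ = 6 * (Real.sqrt Dv + Real.sqrt Rv + Real.sqrt Nv) := Real.sqrt_sq (by positivity)
end
end

section
/- For all $f \in H^2(\mathbb{R}^2)$ and all $x \in \mathbb{R}^2 \setminus \{0\}$, there is an absolute constant $C$ such that $|x| \, |f(x)|^2 \le C \sum_{a=0,1} \left( \|\partial_r \Omega^a f\|_{L^2(\mathbb{R}^2)}^2 + \|\Omega^a f\|_{L^2(\mathbb{R}^2)}^2 \right)$, provided the right-hand side is finite. -/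
open MeasureTheory

noncomputable section

/-- Components of `ω = x / |x|`. -/
noncomputable def omegaV (x : E2) (k : Fin 2) : ℝ := x k / ‖x‖

/-- Components of `x⊥ = (-x₂, x₁)`. -/
noncomputable def xPerp (x : E2) (k : Fin 2) : ℝ :=
  if k = 0 then -(x 1) else x 0

/-- Radial derivative `∂ᵣf = (x/|x|) · ∇f`. -/
noncomputable def radialD (f : E2 → ℝ) (x : E2) : ℝ :=
  ∑ k : Fin 2, omegaV x k * pd k f x

/-- Rotation vector field `Ωf = x⊥ · ∇f = -x₂∂₁f + x₁∂₂f`. -/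
noncomputable def angularD (f : E2 → ℝ) (x : E2) : ℝ :=
  ∑ k : Fin 2, xPerp x k * pd k f x

open Real Set

def pol (s θ : ℝ) : E2 := !₂[s * Real.cos θ, s * Real.sin θ]

noncomputable def E0 : E2 := EuclideanSpace.single (0 : Fin 2) (1 : ℝ)
noncomputable def E1 : E2 := EuclideanSpace.single (1 : Fin 2) (1 : ℝ)

lemma pol_eq (s θ : ℝ) : pol s θ = (s * cos θ) • E0 + (s * sin θ) • E1 := by
  ext i
  fin_cases i <;>
    simp [pol, E0, E1, EuclideanSpace.single_apply, PiLp.add_apply, PiLp.smul_apply]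

lemma pol_apply_zero (s θ : ℝ) : pol s θ 0 = s * cos θ := rfl
lemma pol_apply_one (s θ : ℝ) : pol s θ 1 = s * sin θ := rfl

lemma pol_smul (t θ : ℝ) : pol t θ = t • pol 1 θ := by
  ext i
  fin_cases i <;> simp [pol, PiLp.smul_apply]

lemma norm_pol {s : ℝ} (hs : 0 ≤ s) (θ : ℝ) : ‖pol s θ‖ = s := by
  rw [EuclideanSpace.norm_eq]
  have h1 : ∑ i : Fin 2, ‖pol s θ i‖ ^ 2 = s ^ 2 := by
    rw [Fin.sum_univ_two, pol_apply_zero, pol_apply_one]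
    simp only [Real.norm_eq_abs, sq_abs]
    have := sin_sq_add_cos_sq θ
    nlinarith
  rw [h1, Real.sqrt_sq hs]

lemma pol_periodic (t φ : ℝ) : pol t (φ + 2 * π) = pol t φ := by
  ext i
  fin_cases i <;> simp [pol, Real.cos_add_two_pi, Real.sin_add_two_pi]

lemma continuous_pol : Continuous (fun q : ℝ × ℝ => pol q.1 q.2) := by
  have e : (fun q : ℝ × ℝ => pol q.1 q.2)
      = fun q : ℝ × ℝ => (q.1 * cos q.2) • E0 + (q.1 * sin q.2) • E1 :=
    funext fun q => pol_eq q.1 q.2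
  rw [e]; fun_prop

section f
variable {f : E2 → ℝ}

lemma contDiff_pd (hf : ContDiff ℝ 2 f) (k : Fin 2) : ContDiff ℝ 1 (pd k f) :=
  (hf.fderiv_right (by norm_num)).clm_apply contDiff_const

lemma continuous_pd (hf : ContDiff ℝ 1 f) (k : Fin 2) : Continuous (pd k f) := by
  have h : ContDiff ℝ 0 (pd k f) := (hf.fderiv_right (by norm_num)).clm_apply contDiff_const
  exact contDiff_zero.mp h

lemma contDiff_proj (k : Fin 2) (n : WithTop ℕ∞) : ContDiff ℝ n (fun x : E2 => x k) :=
  (EuclideanSpace.proj k : E2 →L[ℝ] ℝ).contDiff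

lemma angularD_eq : angularD f = fun x => (-(x 1)) * pd 0 f x + x 0 * pd 1 f x := by
  funext x
  simp [angularD, xPerp, Fin.sum_univ_two]

lemma contDiff_angularD (hf : ContDiff ℝ 2 f) : ContDiff ℝ 1 (angularD f) := by
  rw [angularD_eq]
  exact (((contDiff_proj 1 1).neg).mul (contDiff_pd hf 0)).add
    ((contDiff_proj 0 1).mul (contDiff_pd hf 1))

lemma radialD_eq : radialD f = fun y => y 0 / ‖y‖ * pd 0 f y + y 1 / ‖y‖ * pd 1 f y := by
  funext y
  simp [radialD, omegaV, Fin.sum_univ_two]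

lemma measurable_radialD (hf : ContDiff ℝ 1 f) : Measurable (radialD f) := by
  rw [radialD_eq]
  exact ((((contDiff_proj 0 1).continuous.measurable).div continuous_norm.measurable).mul
      (continuous_pd hf 0).measurable).add
    ((((contDiff_proj 1 1).continuous.measurable).div continuous_norm.measurable).mul
      (continuous_pd hf 1).measurable)

lemma radialD_pol {s : ℝ} (hs : 0 < s) (θ : ℝ) :
    radialD f (pol s θ) = cos θ * pd 0 f (pol s θ) + sin θ * pd 1 f (pol s θ) := by
  rw [radialD_eq]
  simp only [pol_apply_zero, pol_apply_one, norm_pol hs.le]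
  field_simp

lemma hasDerivAt_pol_radial {s θ : ℝ} (hfd : DifferentiableAt ℝ f (pol s θ)) :
    HasDerivAt (fun t => f (pol t θ))
      (cos θ * pd 0 f (pol s θ) + sin θ * pd 1 f (pol s θ)) s := by
  have h1 : HasDerivAt (fun t : ℝ => pol t θ) (pol 1 θ) s := by
    have e : (fun t : ℝ => pol t θ) = fun t => t • pol 1 θ := funext fun t => pol_smul t θ
    rw [e]
    simpa using (hasDerivAt_id s).smul_const (pol 1 θ)
  have h2 := hfd.hasFDerivAt.comp_hasDerivAt s h1
  have h3 : fderiv ℝ f (pol s θ) (pol 1 θ)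
      = cos θ * pd 0 f (pol s θ) + sin θ * pd 1 f (pol s θ) := by
    rw [pol_eq 1 θ]
    simp [pd, E0, E1, map_add, _root_.map_smul, smul_eq_mul]
  rw [h3] at h2
  exact h2

lemma hasDerivAt_pol_angular {s θ : ℝ} (hfd : DifferentiableAt ℝ f (pol s θ)) :
    HasDerivAt (fun φ => f (pol s φ)) (angularD f (pol s θ)) θ := by
  have h0 : HasDerivAt (fun φ : ℝ => (s * cos φ) • E0) ((s * -sin θ) • E0) θ :=
    ((Real.hasDerivAt_cos θ).const_mul s).smul_const E0
  have h1 : HasDerivAt (fun φ : ℝ => (s * sin φ) • E1) ((s * cos θ) • E1) θ :=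
    ((Real.hasDerivAt_sin θ).const_mul s).smul_const E1
  have hp : HasDerivAt (fun φ : ℝ => pol s φ) ((s * -sin θ) • E0 + (s * cos θ) • E1) θ := by
    have e : (fun φ : ℝ => pol s φ) = fun φ => (s * cos φ) • E0 + (s * sin φ) • E1 :=
      funext fun φ => pol_eq s φ
    rw [e]
    exact h0.add h1
  have h2 := hfd.hasFDerivAt.comp_hasDerivAt θ hp
  have h3 : fderiv ℝ f (pol s θ) ((s * -sin θ) • E0 + (s * cos θ) • E1)
      = angularD f (pol s θ) := by
    simp [angularD, xPerp, Fin.sum_univ_two, pd, E0, E1, map_add, _root_.map_smul, smul_eq_mul,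
      pol_apply_zero, pol_apply_one]
  rw [h3] at h2
  exact h2

end f

theorem lintegral_comp_polarCoord_symm' (g : ℝ × ℝ → ENNReal) :
    (∫⁻ p in polarCoord.target, ENNReal.ofReal p.1 * g (polarCoord.symm p)) = ∫⁻ p, g p := by
  set B : ℝ × ℝ → ℝ × ℝ →L[ℝ] ℝ × ℝ := fun p =>
    LinearMap.toContinuousLinearMap (Matrix.toLin (Module.Basis.finTwoProd ℝ) (Module.Basis.finTwoProd ℝ)
      !![cos p.2, -p.1 * sin p.2; sin p.2, p.1 * cos p.2])
  have A : ∀ p ∈ polarCoord.target, HasFDerivWithinAt polarCoord.symm (B p) polarCoord.target p :=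
    fun p _ => (hasFDerivAt_polarCoord_symm p).hasFDerivWithinAt
  have B_det : ∀ p, (B p).det = p.1 := by
    intro p
    conv_rhs => rw [← one_mul p.1, ← cos_sq_add_sin_sq p.2]
    simp only [B, neg_mul, LinearMap.det_toContinuousLinearMap, LinearMap.det_toLin,
      Matrix.det_fin_two_of, sub_neg_eq_add]
    ring
  have hinj : InjOn polarCoord.symm polarCoord.target := by
    have := polarCoord.symm.injOn
    rwa [OpenPartialHomeomorph.symm_source] at this
  have himg : polarCoord.symm '' polarCoord.target = polarCoord.source :=
    polarCoord.symm_image_target_eq_source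
  calc ∫⁻ p in polarCoord.target, ENNReal.ofReal p.1 * g (polarCoord.symm p)
      = ∫⁻ p in polarCoord.target, ENNReal.ofReal |(B p).det| * g (polarCoord.symm p) := by
        apply setLIntegral_congr_fun polarCoord.open_target.measurableSet
        intro p hp
        dsimp only
        rw [B_det, abs_of_pos hp.1]
    _ = ∫⁻ p in polarCoord.symm '' polarCoord.target, g p :=
        (lintegral_image_eq_lintegral_abs_det_fderiv_mul volume
          polarCoord.open_target.measurableSet A hinj g).symm
    _ = ∫⁻ p, g p := by
        rw [himg]
        exact (setLIntegral_congr polarCoord_source_ae_eq_univ).trans (setLIntegral_univ g)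

noncomputable def me2 : E2 ≃ᵐ ℝ × ℝ :=
  (MeasurableEquiv.toLp 2 (Fin 2 → ℝ)).symm.trans MeasurableEquiv.finTwoArrow

lemma me2_mp : MeasurePreserving me2 volume volume :=
  (volume_preserving_finTwoArrow ℝ).comp (EuclideanSpace.volume_preserving_symm_measurableEquiv_toLp (Fin 2))

lemma me2_symm_apply (q : ℝ × ℝ) (i : Fin 2) : me2.symm q i = ![q.1, q.2] i := by
  simp [me2, MeasurableEquiv.finTwoArrow, MeasurableEquiv.toLp,
    MeasurableEquiv.trans, MeasurableEquiv.symm, MeasurableEquiv.piFinTwo_apply,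
    MeasurableEquiv.piFinTwo]

lemma me2_symm_polar (q : ℝ × ℝ) : me2.symm (polarCoord.symm q) = pol q.1 q.2 := by
  ext i
  rw [me2_symm_apply]
  fin_cases i <;> simp [polarCoord_symm_apply, pol]

theorem lintegral_polar_E2 (G : E2 → ENNReal) (hG : Measurable G) :
    ∫⁻ q in Ioi (0:ℝ) ×ˢ Ioo (-π) π, ENNReal.ofReal q.1 * G (pol q.1 q.2) = ∫⁻ y, G y := by
  have h0 : ∫⁻ p : ℝ × ℝ, G (me2.symm p) = ∫⁻ y, G y :=
    (me2_mp.symm me2).lintegral_comp hG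
  rw [← h0, ← lintegral_comp_polarCoord_symm' (fun p => G (me2.symm p)), polarCoord_target]
  apply setLIntegral_congr_fun (measurableSet_Ioi.prod measurableSet_Ioo)
  intro q _
  dsimp only
  rw [me2_symm_polar]

/-- translation invariance for set lintegrals -/
lemma setLIntegral_shift (D : ℝ → ENNReal) (hD : Measurable D) (c : ℝ) {s : Set ℝ}
    (hs : MeasurableSet s) :
    ∫⁻ y in (fun y => y + c) ⁻¹' s, D (y + c) = ∫⁻ y in s, D y :=
  (measurePreserving_add_right volume c).setLIntegral_comp_preimage hs hD

lemma window_aux (D : ℝ → ENNReal) (hD : Measurable D)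
    (hper : ∀ φ, D (φ + 2 * π) = D φ) :
    ∫⁻ φ in Ioc 0 (2 * π), D φ = ∫⁻ φ in Ioc (-π) π, D φ := by
  have h1 : Ioc (0:ℝ) (2 * π) = Ioc 0 π ∪ Ioc π (2 * π) :=
    (Ioc_union_Ioc_eq_Ioc (by positivity) (by nlinarith [pi_pos])).symm
  have h2 : Ioc (-π) π = Ioc (-π) 0 ∪ Ioc 0 π :=
    (Ioc_union_Ioc_eq_Ioc (by nlinarith [pi_pos]) (by positivity)).symm
  have hshift : ∫⁻ φ in Ioc π (2 * π), D φ = ∫⁻ φ in Ioc (-π) 0, D φ := by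
    have hpre : (fun y : ℝ => y + 2 * π) ⁻¹' Ioc π (2 * π) = Ioc (-π) 0 := by
      ext y; simp only [mem_preimage, mem_Ioc]; constructor <;> intro h <;> constructor <;> linarith [h.1, h.2]
    have := setLIntegral_shift D hD (2 * π) (measurableSet_Ioc (a := π) (b := 2 * π))
    rw [hpre] at this
    rw [← this]
    exact setLIntegral_congr_fun measurableSet_Ioc (by intro y _; exact hper y)
  rw [h1, h2, lintegral_union measurableSet_Ioc (Set.Ioc_disjoint_Ioc_of_le le_rfl),
    lintegral_union measurableSet_Ioc (Set.Ioc_disjoint_Ioc_of_le le_rfl), hshift]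
  ring

lemma window (D : ℝ → ENNReal) (hD : Measurable D)
    (hper : ∀ φ, D (φ + 2 * π) = D φ) {a : ℝ} (ha1 : -(2*π) ≤ a) (ha2 : a ≤ 0) :
    ∫⁻ φ in Ioo a (a + 2 * π), D φ ≤ 2 * ∫⁻ φ in Ioo (-π) π, D φ := by
  have hIoo : ∫⁻ φ in Ioo (-π) π, D φ = ∫⁻ φ in Ioc (-π) π, D φ :=
    setLIntegral_congr Ioo_ae_eq_Ioc
  have hsub : Ioo a (a + 2 * π) ⊆ Ioc (-(2*π)) 0 ∪ Ioc 0 (2 * π) := by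
    intro y hy
    rcases le_or_gt y 0 with h | h
    · exact Or.inl ⟨by linarith [hy.1], h⟩
    · exact Or.inr ⟨h, by linarith [hy.2]⟩
  have hneg : ∫⁻ φ in Ioc (-(2*π)) 0, D φ = ∫⁻ φ in Ioc 0 (2 * π), D φ := by
    have hpre : (fun y : ℝ => y + -(2 * π)) ⁻¹' Ioc (-(2*π)) 0 = Ioc 0 (2 * π) := by
      ext y; simp only [mem_preimage, mem_Ioc]; constructor <;> intro h <;> constructor <;> linarith [h.1, h.2]
    have := setLIntegral_shift D hD (-(2 * π)) (measurableSet_Ioc (a := -(2*π)) (b := 0))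
    rw [hpre] at this
    rw [← this]
    refine setLIntegral_congr_fun measurableSet_Ioc ?_
    intro y _
    dsimp only
    have : D (y + -(2*π)) = D ((y + -(2*π)) + 2 * π) := (hper _).symm
    rw [this]; ring_nf
  calc ∫⁻ φ in Ioo a (a + 2 * π), D φ
      ≤ ∫⁻ φ in Ioc (-(2*π)) 0 ∪ Ioc 0 (2 * π), D φ := lintegral_mono_set hsub
    _ ≤ (∫⁻ φ in Ioc (-(2*π)) 0, D φ) + ∫⁻ φ in Ioc 0 (2 * π), D φ := lintegral_union_le _ _ _
    _ = 2 * ∫⁻ φ in Ioc 0 (2 * π), D φ := by rw [hneg]; ring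
    _ = 2 * ∫⁻ φ in Ioo (-π) π, D φ := by rw [window_aux D hD hper, hIoo]

noncomputable def uu (f : E2 → ℝ) (φ t : ℝ) : ℝ := f (pol t φ)
noncomputable def ww (f : E2 → ℝ) (φ t : ℝ) : ℝ := angularD f (pol t φ)
noncomputable def uR (f : E2 → ℝ) (φ t : ℝ) : ℝ :=
  cos φ * pd 0 f (pol t φ) + sin φ * pd 1 f (pol t φ)
noncomputable def wR (f : E2 → ℝ) (φ t : ℝ) : ℝ := uR (angularD f) φ t
noncomputable def gf (f : E2 → ℝ) (φ t : ℝ) : ℝ :=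
  2 * t * (|uu f φ t * uR f φ t| + |ww f φ t * wR f φ t|)
noncomputable def bB (f : E2 → ℝ) (φ t : ℝ) : ℝ := t * (uu f φ t ^ 2 + ww f φ t ^ 2)
noncomputable def Gf (f : E2 → ℝ) (φ : ℝ) : ENNReal :=
  ∫⁻ t in Ioi 0, ENNReal.ofReal (gf f φ t)
noncomputable def Hf (f : E2 → ℝ) (φ : ℝ) : ENNReal :=
  ∫⁻ t in Ioi 0, ENNReal.ofReal (bB f φ t)
noncomputable def Qf (f : E2 → ℝ) (y : E2) : ℝ :=
  f y ^ 2 + radialD f y ^ 2 + angularD f y ^ 2 + radialD (angularD f) y ^ 2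

section main
variable {f : E2 → ℝ} (hf : ContDiff ℝ 2 f)

noncomputable def P2 : ℝ × ℝ → E2 := fun q => pol q.2 q.1

lemma continuous_P2 : Continuous P2 :=
  continuous_pol.comp (continuous_snd.prodMk continuous_fst)

include hf

lemma continuous_uu : Continuous (fun q : ℝ × ℝ => uu f q.1 q.2) :=
  hf.continuous.comp continuous_P2

lemma continuous_ww : Continuous (fun q : ℝ × ℝ => ww f q.1 q.2) :=
  (contDiff_angularD hf).continuous.comp continuous_P2

lemma continuous_uR : Continuous (fun q : ℝ × ℝ => uR f q.1 q.2) := by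
  have h1 : ContDiff ℝ 1 f := hf.of_le (by norm_num)
  exact ((Real.continuous_cos.comp continuous_fst).mul
      ((continuous_pd h1 0).comp continuous_P2)).add
    ((Real.continuous_sin.comp continuous_fst).mul ((continuous_pd h1 1).comp continuous_P2))

lemma continuous_wR : Continuous (fun q : ℝ × ℝ => wR f q.1 q.2) := by
  have h1 : ContDiff ℝ 1 (angularD f) := contDiff_angularD hf
  exact ((Real.continuous_cos.comp continuous_fst).mul
      ((continuous_pd h1 0).comp continuous_P2)).add
    ((Real.continuous_sin.comp continuous_fst).mul ((continuous_pd h1 1).comp continuous_P2))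

lemma continuous_gf : Continuous (fun q : ℝ × ℝ => gf f q.1 q.2) :=
  (continuous_const.mul continuous_snd).mul
    ((((continuous_uu hf).mul (continuous_uR hf)).abs).add
      (((continuous_ww hf).mul (continuous_wR hf)).abs))

lemma continuous_bB : Continuous (fun q : ℝ × ℝ => bB f q.1 q.2) :=
  continuous_snd.mul (((continuous_uu hf).pow 2).add ((continuous_ww hf).pow 2))

lemma measurable_Qf : Measurable (Qf f) := by
  have h1 : ContDiff ℝ 1 f := hf.of_le (by norm_num)
  exact ((((hf.continuous.measurable.pow_const 2).add
      ((measurable_radialD h1).pow_const 2)).add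
      (((contDiff_angularD hf).continuous.measurable).pow_const 2)).add
      ((measurable_radialD (contDiff_angularD hf)).pow_const 2))

omit hf in
lemma measurable_G_of_cont {k : ℝ → ℝ → ℝ} (hk : Continuous (fun q : ℝ × ℝ => k q.1 q.2)) :
    Measurable (fun φ => ∫⁻ t in Ioi 0, ENNReal.ofReal (k φ t)) := by
  have e : (fun φ => ∫⁻ t in Ioi 0, ENNReal.ofReal (k φ t))
      = fun φ => ∫⁻ t, (Ioi (0:ℝ)).indicator (fun t => ENNReal.ofReal (k φ t)) t := by
    funext φ
    rw [lintegral_indicator measurableSet_Ioi]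
  rw [e]
  apply Measurable.lintegral_prod_right
    (f := fun φ t => (Ioi (0:ℝ)).indicator (fun t => ENNReal.ofReal (k φ t)) t)
  have e2 : (Function.uncurry fun φ t => (Ioi (0:ℝ)).indicator
        (fun t => ENNReal.ofReal (k φ t)) t)
      = ((univ : Set ℝ) ×ˢ Ioi (0:ℝ)).indicator (fun q => ENNReal.ofReal (k q.1 q.2)) := by
    funext q
    by_cases h : q.2 ∈ Ioi (0:ℝ) <;>
      simp [Function.uncurry, Set.indicator, h]
  rw [e2]
  exact (ENNReal.measurable_ofReal.comp hk.measurable).indicator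
    (MeasurableSet.univ.prod measurableSet_Ioi)

lemma measurable_Gf : Measurable (Gf f) := measurable_G_of_cont (continuous_gf hf)
lemma measurable_Hf : Measurable (Hf f) := measurable_G_of_cont (continuous_bB hf)

omit hf in
lemma Gf_periodic (φ : ℝ) : Gf f (φ + 2 * π) = Gf f φ := by
  unfold Gf gf uu ww wR uR
  simp only [pol_periodic, Real.cos_add_two_pi, Real.sin_add_two_pi]

omit hf in
lemma Hf_periodic (φ : ℝ) : Hf f (φ + 2 * π) = Hf f φ := by
  unfold Hf bB uu ww
  simp only [pol_periodic]

/-- Tonelli + polar coordinates bound -/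
lemma lint_polar_le {k : ℝ → ℝ → ℝ}
    (hk : Continuous (fun q : ℝ × ℝ => k q.1 q.2))
    (hle : ∀ φ, ∀ t > (0:ℝ), k φ t ≤ t * Qf f (pol t φ)) :
    ∫⁻ φ in Ioo (-π) π, ∫⁻ t in Ioi 0, ENNReal.ofReal (k φ t)
      ≤ ∫⁻ y, ENNReal.ofReal (Qf f y) := by
  have hQm : Measurable fun y => ENNReal.ofReal (Qf f y) :=
    ENNReal.measurable_ofReal.comp (measurable_Qf hf)
  have step1 : ∫⁻ φ in Ioo (-π) π, ∫⁻ t in Ioi 0, ENNReal.ofReal (k φ t)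
      ≤ ∫⁻ φ in Ioo (-π) π, ∫⁻ t in Ioi 0,
          ENNReal.ofReal t * ENNReal.ofReal (Qf f (pol t φ)) := by
    refine lintegral_mono fun φ => ?_
    refine setLIntegral_mono (ENNReal.measurable_ofReal.mul
      (hQm.comp (continuous_pol.comp (continuous_id.prodMk continuous_const)).measurable)) ?_
    intro t ht
    rw [← ENNReal.ofReal_mul (le_of_lt ht)]
    exact ENNReal.ofReal_le_ofReal (hle φ t ht)
  have hmeas : Measurable fun q : ℝ × ℝ =>
      ENNReal.ofReal q.1 * ENNReal.ofReal (Qf f (pol q.1 q.2)) :=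
    (ENNReal.measurable_ofReal.comp measurable_fst).mul
      (hQm.comp continuous_pol.measurable)
  have step2 : ∫⁻ φ in Ioo (-π) π, ∫⁻ t in Ioi 0,
        ENNReal.ofReal t * ENNReal.ofReal (Qf f (pol t φ))
      = ∫⁻ q in Ioi (0:ℝ) ×ˢ Ioo (-π) π,
          ENNReal.ofReal q.1 * ENNReal.ofReal (Qf f (pol q.1 q.2)) := by
    have hsw : Measurable (Function.uncurry fun (φ t : ℝ) =>
        ENNReal.ofReal t * ENNReal.ofReal (Qf f (pol t φ))) := hmeas.comp measurable_swap
    rw [lintegral_lintegral_swap hsw.aemeasurable]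
    rw [← lintegral_prod _ hmeas.aemeasurable, Measure.prod_restrict, ← Measure.volume_eq_prod]
  exact step1.trans (le_of_eq (step2.trans (lintegral_polar_E2 _ hQm)))
end main

section main2
variable {f : E2 → ℝ} (hf : ContDiff ℝ 2 f)

include hf

omit hf in
lemma continuous_pol_t (θ : ℝ) : Continuous fun t => pol t θ := by
  have e : (fun t : ℝ => pol t θ) = fun t => t • pol 1 θ := funext fun t => pol_smul t θ
  rw [e]; exact continuous_id.smul continuous_const

lemma continuous_t_uu (φ : ℝ) : Continuous (fun t => uu f φ t) :=
  hf.continuous.comp (continuous_pol_t φ)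
lemma continuous_t_ww (φ : ℝ) : Continuous (fun t => ww f φ t) :=
  (contDiff_angularD hf).continuous.comp (continuous_pol_t φ)
lemma continuous_t_uR (φ : ℝ) : Continuous (fun t => uR f φ t) := by
  have h1 : ContDiff ℝ 1 f := hf.of_le (by norm_num)
  exact (continuous_const.mul ((continuous_pd h1 0).comp (continuous_pol_t φ))).add
    (continuous_const.mul ((continuous_pd h1 1).comp (continuous_pol_t φ)))
lemma continuous_t_wR (φ : ℝ) : Continuous (fun t => wR f φ t) := by
  have h1 : ContDiff ℝ 1 (angularD f) := contDiff_angularD hf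
  exact (continuous_const.mul ((continuous_pd h1 0).comp (continuous_pol_t φ))).add
    (continuous_const.mul ((continuous_pd h1 1).comp (continuous_pol_t φ)))
lemma continuous_t_gf (φ : ℝ) : Continuous (fun t => gf f φ t) :=
  (continuous_const.mul continuous_id).mul
    ((((continuous_t_uu hf φ).mul (continuous_t_uR hf φ)).abs).add
      (((continuous_t_ww hf φ).mul (continuous_t_wR hf φ)).abs))
lemma continuous_t_bB (φ : ℝ) : Continuous (fun t => bB f φ t) :=
  continuous_id.mul (((continuous_t_uu hf φ).pow 2).add ((continuous_t_ww hf φ).pow 2))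

/-- The ray (Strauss) estimate. -/
lemma ray_estimate {r φ : ℝ} (hr : 0 < r) (hG : Gf f φ ≠ ⊤) (hH : Hf f φ ≠ ⊤) :
    ENNReal.ofReal (r * (uu f φ r ^ 2 + ww f φ r ^ 2)) ≤ Gf f φ := by
  have hfd : Differentiable ℝ f := hf.differentiable (by norm_num)
  have hfad : Differentiable ℝ (angularD f) := (contDiff_angularD hf).differentiable one_ne_zero
  -- ε-smallness along a sequence
  have heps : ∀ ε > (0:ℝ), ∃ s, r ≤ s ∧ bB f φ s < ε := by
    by_contra hcon
    push_neg at hcon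
    obtain ⟨ε, hε, hbig⟩ := hcon
    have hlow : Hf f φ = ⊤ := by
      refine top_unique ?_
      calc (⊤ : ENNReal) = ENNReal.ofReal ε * volume (Ici r) := by
            rw [Real.volume_Ici, ENNReal.mul_top (ENNReal.ofReal_pos.mpr hε).ne']
        _ = ∫⁻ _ in Ici r, ENNReal.ofReal ε := (setLIntegral_const _ _).symm
        _ ≤ ∫⁻ t in Ici r, ENNReal.ofReal (bB f φ t) := by
            refine setLIntegral_mono (continuous_t_bB hf φ).measurable.ennreal_ofReal ?_
            intro t ht
            exact ENNReal.ofReal_le_ofReal (hbig t ht)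
        _ ≤ ∫⁻ t in Ioi 0, ENNReal.ofReal (bB f φ t) :=
            lintegral_mono_set fun t ht => lt_of_lt_of_le hr ht
        _ = Hf f φ := rfl
    exact hH hlow
  -- FTC bound valid for every s ≥ r
  have key : ∀ s, r ≤ s → r * (uu f φ r ^ 2 + ww f φ r ^ 2)
      ≤ bB f φ s + (Gf f φ).toReal := by
    intro s hrs
    set F : ℝ → ℝ := fun t => t * (uu f φ t ^ 2 + ww f φ t ^ 2) with hF
    set F' : ℝ → ℝ := fun t =>
      (uu f φ t ^ 2 + ww f φ t ^ 2)
        + t * (2 * uu f φ t * uR f φ t + 2 * ww f φ t * wR f φ t) with hF'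
    have hcontF' : Continuous F' := by
      refine (((continuous_t_uu hf φ).pow 2).add ((continuous_t_ww hf φ).pow 2)).add ?_
      exact continuous_id.mul
        (((continuous_const.mul (continuous_t_uu hf φ)).mul (continuous_t_uR hf φ)).add
          ((continuous_const.mul (continuous_t_ww hf φ)).mul (continuous_t_wR hf φ)))
    have hderiv : ∀ t ∈ uIcc r s, HasDerivAt F (F' t) t := by
      intro t ht
      rw [uIcc_of_le hrs] at ht
      have hu : HasDerivAt (fun t => uu f φ t) (uR f φ t) t :=
        hasDerivAt_pol_radial (hfd _)
      have hw : HasDerivAt (fun t => ww f φ t) (wR f φ t) t :=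
        hasDerivAt_pol_radial (f := angularD f) (hfad _)
      have := (hasDerivAt_id t).mul ((hu.pow 2).add (hw.pow 2))
      refine this.congr_deriv ?_
      simp only [Pi.add_apply, Pi.pow_apply, Nat.cast_ofNat, pow_one, id_eq]
      ring
    have hFTC : ∫ t in r..s, F' t = F s - F r :=
      intervalIntegral.integral_eq_sub_of_hasDerivAt hderiv
        (hcontF'.intervalIntegrable r s)
    have hlb : ∫ t in r..s, (-(gf f φ t)) ≤ ∫ t in r..s, F' t := by
      refine intervalIntegral.integral_mono_on hrs
        ((continuous_t_gf hf φ).neg.intervalIntegrable r s)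
        (hcontF'.intervalIntegrable r s) ?_
      intro t ht
      have ht0 : 0 < t := lt_of_lt_of_le hr ht.1
      have h1 : -(uu f φ t * uR f φ t) ≤ |uu f φ t * uR f φ t| := neg_le_abs _
      have h2 : -(ww f φ t * wR f φ t) ≤ |ww f φ t * wR f φ t| := neg_le_abs _
      simp only [hF', gf]
      nlinarith [sq_nonneg (uu f φ t), sq_nonneg (ww f φ t),
        mul_le_mul_of_nonneg_left h1 ht0.le, mul_le_mul_of_nonneg_left h2 ht0.le]
    have hneg : ∫ t in r..s, (-(gf f φ t)) = -∫ t in r..s, gf f φ t :=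
      intervalIntegral.integral_neg
    have hgf_nonneg : ∀ t ∈ Ioc r s, 0 ≤ gf f φ t := by
      intro t ht
      have ht0 : 0 < t := lt_of_lt_of_le hr ht.1.le
      have := abs_nonneg (uu f φ t * uR f φ t)
      have := abs_nonneg (ww f φ t * wR f φ t)
      unfold gf
      positivity
    have hgfint : ∫ t in r..s, gf f φ t ≤ (Gf f φ).toReal := by
      rw [intervalIntegral.integral_of_le hrs]
      have hInt : IntegrableOn (fun t => gf f φ t) (Ioc r s) :=
        (continuous_t_gf hf φ).integrableOn_Ioc
      have hofReal : ENNReal.ofReal (∫ t in Ioc r s, gf f φ t)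
          = ∫⁻ t in Ioc r s, ENNReal.ofReal (gf f φ t) := by
        refine ofReal_integral_eq_lintegral_ofReal hInt ?_
        filter_upwards [ae_restrict_mem measurableSet_Ioc] with t ht
        exact hgf_nonneg t ht
      have hle : ∫⁻ t in Ioc r s, ENNReal.ofReal (gf f φ t) ≤ Gf f φ :=
        lintegral_mono_set fun t ht => lt_of_lt_of_le hr ht.1.le
      have h0 : 0 ≤ ∫ t in Ioc r s, gf f φ t :=
        setIntegral_nonneg measurableSet_Ioc hgf_nonneg
      calc ∫ t in Ioc r s, gf f φ t
          = (ENNReal.ofReal (∫ t in Ioc r s, gf f φ t)).toReal := by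
            rw [ENNReal.toReal_ofReal h0]
        _ ≤ (Gf f φ).toReal := ENNReal.toReal_mono hG (hofReal ▸ hle)
    have : F r ≤ F s + ∫ t in r..s, gf f φ t := by
      have := hlb
      rw [hneg, hFTC] at this
      linarith
    calc r * (uu f φ r ^ 2 + ww f φ r ^ 2) = F r := rfl
      _ ≤ F s + ∫ t in r..s, gf f φ t := this
      _ ≤ bB f φ s + (Gf f φ).toReal := by
          have : F s = bB f φ s := rfl
          rw [this]
          exact add_le_add le_rfl hgfint
  have hfin : r * (uu f φ r ^ 2 + ww f φ r ^ 2) ≤ (Gf f φ).toReal := by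
    refine le_of_forall_pos_le_add fun ε hε => ?_
    obtain ⟨s, hrs, hsB⟩ := heps ε hε
    calc r * (uu f φ r ^ 2 + ww f φ r ^ 2) ≤ bB f φ s + (Gf f φ).toReal := key s hrs
      _ ≤ (Gf f φ).toReal + ε := by linarith
  calc ENNReal.ofReal (r * (uu f φ r ^ 2 + ww f φ r ^ 2))
      ≤ ENNReal.ofReal ((Gf f φ).toReal) := ENNReal.ofReal_le_ofReal hfin
    _ = Gf f φ := ENNReal.ofReal_toReal hG

/-- circle estimate -/
lemma circle_estimate {r : ℝ} (θ₀ φ : ℝ) (hφ : φ ∈ Icc (θ₀ - π) (θ₀ + π)) :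
    uu f θ₀ r ^ 2 ≤ uu f φ r ^ 2
      + ∫ ψ in (θ₀ - π)..(θ₀ + π), |2 * uu f ψ r * ww f ψ r| := by
  have hfd : Differentiable ℝ f := hf.differentiable (by norm_num)
  set h : ℝ → ℝ := fun ψ => 2 * uu f ψ r * ww f ψ r with hh
  have hhc : Continuous h := by
    refine (continuous_const.mul ?_).mul ?_
    · exact (continuous_uu hf).comp (continuous_id.prodMk continuous_const)
    · exact (continuous_ww hf).comp (continuous_id.prodMk continuous_const)
  have hAd : ∀ ψ : ℝ, HasDerivAt (fun ψ => uu f ψ r ^ 2) (h ψ) ψ := by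
    intro ψ
    have hu : HasDerivAt (fun ψ => uu f ψ r) (ww f ψ r) ψ :=
      hasDerivAt_pol_angular (hfd _)
    have := hu.pow 2
    refine this.congr_deriv ?_
    simp only [Nat.cast_ofNat, pow_one, hh]
    ring
  have hFTC : ∀ a b : ℝ, ∫ ψ in a..b, h ψ = uu f b r ^ 2 - uu f a r ^ 2 := fun a b =>
    intervalIntegral.integral_eq_sub_of_hasDerivAt (fun ψ _ => hAd ψ)
      (hhc.intervalIntegrable a b)
  have habs_nonneg : 0 ≤ᵐ[volume.restrict (Ioc (θ₀ - π) (θ₀ + π))] fun ψ => |h ψ| :=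
    ae_of_all _ fun ψ => abs_nonneg _
  have hgoal : ∫ ψ in (θ₀ - π)..(θ₀ + π), |2 * uu f ψ r * ww f ψ r|
      = ∫ ψ in (θ₀ - π)..(θ₀ + π), |h ψ| := rfl
  rw [hgoal]
  rcases le_total φ θ₀ with hc | hc
  · have h1 : uu f θ₀ r ^ 2 - uu f φ r ^ 2 = ∫ ψ in φ..θ₀, h ψ := (hFTC φ θ₀).symm
    have h2 : ∫ ψ in φ..θ₀, h ψ ≤ ∫ ψ in φ..θ₀, |h ψ| :=
      intervalIntegral.integral_mono_on hc (hhc.intervalIntegrable _ _)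
        (hhc.abs.intervalIntegrable _ _) (fun ψ _ => le_abs_self _)
    have h3 : ∫ ψ in φ..θ₀, |h ψ| ≤ ∫ ψ in (θ₀ - π)..(θ₀ + π), |h ψ| :=
      intervalIntegral.integral_mono_interval hφ.1 hc (by linarith [pi_pos])
        habs_nonneg (hhc.abs.intervalIntegrable _ _)
    linarith
  · have h1 : uu f φ r ^ 2 - uu f θ₀ r ^ 2 = ∫ ψ in θ₀..φ, h ψ := (hFTC θ₀ φ).symm
    have h2 : -(∫ ψ in θ₀..φ, h ψ) ≤ ∫ ψ in θ₀..φ, |h ψ| := by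
      rw [← intervalIntegral.integral_neg]
      exact intervalIntegral.integral_mono_on hc (hhc.neg.intervalIntegrable _ _)
        (hhc.abs.intervalIntegrable _ _) (fun ψ _ => neg_le_abs _)
    have h3 : ∫ ψ in θ₀..φ, |h ψ| ≤ ∫ ψ in (θ₀ - π)..(θ₀ + π), |h ψ| :=
      intervalIntegral.integral_mono_interval (by linarith [pi_pos]) hc hφ.2
        habs_nonneg (hhc.abs.intervalIntegrable _ _)
    linarith

end main2

/-- Weighted Sobolev inequality: there is an absolute constant `C` such that for all
`f ∈ H²(ℝ²)` and all `x ≠ 0`,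
`|x| |f(x)|² ≤ C ∑_{a=0,1} (‖∂ᵣΩᵃf‖²_{L²} + ‖Ωᵃf‖²_{L²})`, provided the right-hand
side is finite. -/
theorem weighted_sobolev_r_decay :
    ∃ C : ℝ, 0 < C ∧
      ∀ f : E2 → ℝ, ContDiff ℝ 2 f →
        Integrable (fun x : E2 => (f x) ^ 2) →
        Integrable (fun x : E2 => (radialD f x) ^ 2) →
        Integrable (fun x : E2 => (angularD f x) ^ 2) →
        Integrable (fun x : E2 => (radialD (angularD f) x) ^ 2) →
        ∀ x : E2, x ≠ 0 →
          ‖x‖ * (f x) ^ 2 ≤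
            C * ((∫ y : E2, (radialD f y) ^ 2) + (∫ y : E2, (f y) ^ 2)
              + (∫ y : E2, (radialD (angularD f) y) ^ 2)
              + (∫ y : E2, (angularD f y) ^ 2)) := by
  refine ⟨4, by norm_num, ?_⟩
  intro f hf h1 h2 h3 h4 x hx
  set r := ‖x‖ with hrdef
  have hr : 0 < r := norm_pos_iff.mpr hx
  -- the angle of x
  set z : ℂ := ⟨x 0, x 1⟩ with hzdef
  have hz : z ≠ 0 := by
    intro h
    apply hx
    have h0 : x 0 = 0 := congrArg Complex.re h
    have h1' : x 1 = 0 := congrArg Complex.im h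
    ext i
    fin_cases i <;> simp [h0, h1']
  have hnorm : ‖z‖ = r := by
    rw [Complex.norm_def, Complex.normSq_apply, hrdef, EuclideanSpace.norm_eq]
    congr 1
    rw [Fin.sum_univ_two]
    simp [Real.norm_eq_abs, sq_abs]
    ring
  set θ₀ := z.arg with hθdef
  have hθr : -π < θ₀ := Complex.neg_pi_lt_arg z
  have hθl : θ₀ ≤ π := Complex.arg_le_pi z
  have hcos : Real.cos θ₀ = x 0 / r := by rw [hθdef, Complex.cos_arg hz, hnorm]
  have hsin : Real.sin θ₀ = x 1 / r := by rw [hθdef, Complex.sin_arg, hnorm]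
  have hpolx : pol r θ₀ = x := by
    ext i
    fin_cases i <;> simp [pol, hcos, hsin] <;> field_simp
  -- integrability of Q
  have hQi : Integrable (Qf f) := ((h1.add h2).add h3).add h4
  have hQnn : ∀ y, 0 ≤ Qf f y := fun y => by unfold Qf; positivity
  set T := ∫⁻ y, ENNReal.ofReal (Qf f y) with hTdef
  have hT : T = ENNReal.ofReal (∫ y, Qf f y) :=
    (ofReal_integral_eq_lintegral_ofReal hQi (ae_of_all _ hQnn)).symm
  have hTne : T ≠ ⊤ := by rw [hT]; exact ENNReal.ofReal_ne_top
  -- the Tonelli bounds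
  have habs2 : ∀ a b : ℝ, 2 * |a * b| ≤ a ^ 2 + b ^ 2 := by
    intro a b
    rw [abs_mul]
    nlinarith [sq_nonneg (|a| - |b|), sq_abs a, sq_abs b, abs_nonneg a, abs_nonneg b]
  have hGT : ∫⁻ φ in Ioo (-π) π, Gf f φ ≤ T := by
    refine lint_polar_le hf (continuous_gf hf) ?_
    intro φ t ht
    have hru : uR f φ t = radialD f (pol t φ) := (radialD_pol ht φ).symm
    have hrw : wR f φ t = radialD (angularD f) (pol t φ) := (radialD_pol (f := angularD f) ht φ).symm
    unfold gf Qf uu ww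
    rw [hru, hrw]
    have k1 := habs2 (f (pol t φ)) (radialD f (pol t φ))
    have k2 := habs2 (angularD f (pol t φ)) (radialD (angularD f) (pol t φ))
    nlinarith [mul_le_mul_of_nonneg_left k1 ht.le, mul_le_mul_of_nonneg_left k2 ht.le]
  have hHT : ∫⁻ φ in Ioo (-π) π, Hf f φ ≤ T := by
    refine lint_polar_le hf (continuous_bB hf) ?_
    intro φ t ht
    unfold bB Qf uu ww
    have k1 : f (pol t φ) ^ 2 + angularD f (pol t φ) ^ 2 ≤ Qf f (pol t φ) := by
      unfold Qf
      nlinarith [sq_nonneg (radialD f (pol t φ)), sq_nonneg (radialD (angularD f) (pol t φ))]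
    unfold Qf at k1
    nlinarith [mul_le_mul_of_nonneg_left k1 ht.le]
  -- window bounds
  have hw1 : -(2*π) ≤ θ₀ - π := by linarith
  have hw2 : θ₀ - π ≤ 0 := by linarith
  have hGI : ∫⁻ φ in Ioo (θ₀ - π) (θ₀ + π), Gf f φ ≤ 2 * T := by
    have hw := window (Gf f) (measurable_Gf hf) Gf_periodic hw1 hw2
    rw [show θ₀ - π + 2*π = θ₀ + π by ring] at hw
    exact hw.trans (mul_le_mul_right hGT 2)
  have hHI : ∫⁻ φ in Ioo (θ₀ - π) (θ₀ + π), Hf f φ ≤ 2 * T := by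
    have hw := window (Hf f) (measurable_Hf hf) Hf_periodic hw1 hw2
    rw [show θ₀ - π + 2*π = θ₀ + π by ring] at hw
    exact hw.trans (mul_le_mul_right hHT 2)
  have h2Tne : (2 : ENNReal) * T ≠ ⊤ := ENNReal.mul_ne_top (by simp) hTne
  have haefin : ∀ᵐ φ ∂(volume.restrict (Ioo (θ₀ - π) (θ₀ + π))),
      Gf f φ < ⊤ ∧ Hf f φ < ⊤ := by
    have hG := ae_lt_top (measurable_Gf hf) (ne_top_of_le_ne_top h2Tne hGI)
    have hH := ae_lt_top (measurable_Hf hf) (ne_top_of_le_ne_top h2Tne hHI)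
    exact hG.and hH
  -- β and its continuity
  set β : ℝ → ℝ := fun φ => r * (uu f φ r ^ 2 + ww f φ r ^ 2) with hβdef
  have hβnn : ∀ φ, 0 ≤ β φ := fun φ => by
    rw [hβdef]
    positivity
  have hcuuφ : Continuous fun φ => uu f φ r :=
    (continuous_uu hf).comp (continuous_id.prodMk continuous_const)
  have hcwwφ : Continuous fun φ => ww f φ r :=
    (continuous_ww hf).comp (continuous_id.prodMk continuous_const)
  have hβc : Continuous β := continuous_const.mul ((hcuuφ.pow 2).add (hcwwφ.pow 2))
  have hab : θ₀ - π ≤ θ₀ + π := by linarith [pi_pos]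
  -- circle step
  have key1 : ∀ φ ∈ Icc (θ₀ - π) (θ₀ + π),
      r * f x ^ 2 ≤ β φ + ∫ ψ in (θ₀ - π)..(θ₀ + π), β ψ := by
    intro φ hφ
    have hc := circle_estimate hf (r := r) θ₀ φ hφ
    have hfx : f x = uu f θ₀ r := by unfold uu; rw [hpolx]
    have hmono : (∫ ψ in (θ₀ - π)..(θ₀ + π), |2 * uu f ψ r * ww f ψ r|)
        ≤ ∫ ψ in (θ₀ - π)..(θ₀ + π), (uu f ψ r ^ 2 + ww f ψ r ^ 2) := by
      refine intervalIntegral.integral_mono_on hab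
        (((continuous_const.mul hcuuφ).mul hcwwφ).abs.intervalIntegrable _ _)
        (((hcuuφ.pow 2).add (hcwwφ.pow 2)).intervalIntegrable _ _) ?_
      intro ψ _
      have := habs2 (uu f ψ r) (ww f ψ r)
      calc |2 * uu f ψ r * ww f ψ r| = 2 * |uu f ψ r * ww f ψ r| := by
            rw [mul_assoc, abs_mul, abs_two]
        _ ≤ uu f ψ r ^ 2 + ww f ψ r ^ 2 := this
    have hβint : ∫ ψ in (θ₀ - π)..(θ₀ + π), β ψ
        = r * ∫ ψ in (θ₀ - π)..(θ₀ + π), (uu f ψ r ^ 2 + ww f ψ r ^ 2) := by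
      rw [hβdef, intervalIntegral.integral_const_mul]
    have step : r * uu f θ₀ r ^ 2
        ≤ r * (uu f φ r ^ 2 + ∫ ψ in (θ₀ - π)..(θ₀ + π), |2 * uu f ψ r * ww f ψ r|) :=
      mul_le_mul_of_nonneg_left hc hr.le
    have hwwφ : 0 ≤ r * ww f φ r ^ 2 := by positivity
    rw [hfx]
    rw [hβdef]
    calc r * uu f θ₀ r ^ 2
        ≤ r * (uu f φ r ^ 2 + ∫ ψ in (θ₀ - π)..(θ₀ + π), |2 * uu f ψ r * ww f ψ r|) := step
      _ ≤ r * (uu f φ r ^ 2 + ∫ ψ in (θ₀ - π)..(θ₀ + π), (uu f ψ r ^ 2 + ww f ψ r ^ 2)) := by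
          refine mul_le_mul_of_nonneg_left (by linarith) hr.le
      _ = r * uu f φ r ^ 2 + r * ∫ ψ in (θ₀ - π)..(θ₀ + π), (uu f ψ r ^ 2 + ww f ψ r ^ 2) := by
          ring
      _ ≤ r * (uu f φ r ^ 2 + ww f φ r ^ 2)
          + ∫ ψ in (θ₀ - π)..(θ₀ + π), β ψ := by
          rw [hβint]; nlinarith
  -- from interval integral of β to lintegral of Gf
  set J := ∫⁻ φ in Ioo (θ₀ - π) (θ₀ + π), Gf f φ with hJdef
  have hIβ : ENNReal.ofReal (∫ ψ in (θ₀ - π)..(θ₀ + π), β ψ) ≤ J := by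
    rw [intervalIntegral.integral_of_le hab]
    rw [ofReal_integral_eq_lintegral_ofReal hβc.integrableOn_Ioc
      (ae_of_all _ hβnn)]
    rw [← setLIntegral_congr (Ioo_ae_eq_Ioc (a := θ₀ - π) (b := θ₀ + π))]
    refine lintegral_mono_ae ?_
    filter_upwards [haefin] with φ hφ
    exact ray_estimate hf hr hφ.1.ne hφ.2.ne
  -- a.e. pointwise bound
  have key3 : ∀ᵐ φ ∂(volume.restrict (Ioo (θ₀ - π) (θ₀ + π))),
      ENNReal.ofReal (r * f x ^ 2) ≤ Gf f φ + J := by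
    filter_upwards [haefin, ae_restrict_mem measurableSet_Ioo] with φ hfin hmem
    calc ENNReal.ofReal (r * f x ^ 2)
        ≤ ENNReal.ofReal (β φ + ∫ ψ in (θ₀ - π)..(θ₀ + π), β ψ) :=
          ENNReal.ofReal_le_ofReal (key1 φ (Ioo_subset_Icc_self hmem))
      _ ≤ ENNReal.ofReal (β φ) + ENNReal.ofReal (∫ ψ in (θ₀ - π)..(θ₀ + π), β ψ) :=
          ENNReal.ofReal_add_le
      _ ≤ Gf f φ + J := add_le_add (ray_estimate hf hr hfin.1.ne hfin.2.ne) hIβ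
  -- integrate over the window
  set V := ENNReal.ofReal (2 * π) with hVdef
  have hvol : volume (Ioo (θ₀ - π) (θ₀ + π)) = V := by
    rw [Real.volume_Ioo, hVdef]
    congr 1
    ring
  have hint := lintegral_mono_ae key3
  rw [setLIntegral_const, lintegral_add_right _ measurable_const, setLIntegral_const,
    hvol] at hint
  -- hint : ofReal (r * f x ^2) * V ≤ J + J * V
  have hV1 : (1 : ENNReal) ≤ V := by
    rw [hVdef, ← ENNReal.ofReal_one]
    exact ENNReal.ofReal_le_ofReal (by nlinarith [pi_gt_three])
  have hchain : ENNReal.ofReal (r * f x ^ 2) * V ≤ (4 * T) * V := by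
    calc ENNReal.ofReal (r * f x ^ 2) * V ≤ J + J * V := hint
      _ ≤ 2 * T + 2 * T * V := add_le_add hGI (mul_le_mul_left hGI V)
      _ ≤ 2 * T * V + 2 * T * V := by
          refine add_le_add ?_ le_rfl
          calc 2 * T = 2 * T * 1 := (mul_one _).symm
            _ ≤ 2 * T * V := mul_le_mul_right hV1 _
      _ = (4 * T) * V := by ring
  have hV0 : V ≠ 0 := by
    rw [hVdef]
    exact (ENNReal.ofReal_pos.mpr (by positivity)).ne'
  have hVtop : V ≠ ⊤ := by rw [hVdef]; exact ENNReal.ofReal_ne_top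
  have ha4T : ENNReal.ofReal (r * f x ^ 2) ≤ 4 * T :=
    (ENNReal.mul_le_mul_iff_left hV0 hVtop).mp hchain
  have h4Tne : (4 : ENNReal) * T ≠ ⊤ := ENNReal.mul_ne_top (by simp) hTne
  have hfinal := ENNReal.toReal_mono h4Tne ha4T
  rw [ENNReal.toReal_ofReal (by positivity)] at hfinal
  have hTtoReal : ((4 : ENNReal) * T).toReal = 4 * ∫ y, Qf f y := by
    rw [ENNReal.toReal_mul, hT, ENNReal.toReal_ofReal (integral_nonneg hQnn)]
    norm_num
  rw [hTtoReal] at hfinal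
  have hQint : ∫ y, Qf f y = (∫ y, f y ^ 2) + (∫ y, radialD f y ^ 2)
      + (∫ y, angularD f y ^ 2) + (∫ y, radialD (angularD f) y ^ 2) := by
    have i12 : Integrable (fun y : E2 => f y ^ 2 + radialD f y ^ 2) volume := h1.add h2
    have i123 : Integrable (fun y : E2 => f y ^ 2 + radialD f y ^ 2 + angularD f y ^ 2)
      volume := i12.add h3
    unfold Qf
    rw [integral_add i123 h4, integral_add i12 h3, integral_add h1 h2]
  rw [hQint] at hfinal
  linarith
end
end
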